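/- arXiv:2412.00649 — 4 statements merged into one kernel-verified Lean document; each statement's English description precedes it below -/
import Mathlib

section
/- Let A ⊂ ℝ^d be a d-dimensional polytope with set of facet-defining hyperplanes F, where each H ∈ F has outer unit normal n_H. A nonconstant compact convex subset M ⊆ A (with more than one point) admits no 'homothetic decomposition' of the form M = (1/2)(M + t) + (1/2)(M − t) with M ± t ⊆ A for nonzero t, nor a dilation M = (1/2)(z + (1+ε)(M−z)) + (1/2)(z + (1−ε)(M−z)) with both summand bodies contained in A for ε > 0, if and only if: (a) the normals {n_H : H ∈ F, H ∩ M ≠ ∅} span ℝ^d, and (b) the intersection of all H ∈ F with H ∩ M ≠ ∅ is empty. -/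
open scoped Pointwise

/-- Euclidean dot product on `Fin d → ℝ`. -/
def dot {d : ℕ} (x y : Fin d → ℝ) : ℝ := ∑ i, x i * y i

lemma dot_comm {d : ℕ} (x y : Fin d → ℝ) : dot x y = dot y x := by
  simp [dot, mul_comm]

lemma dot_add_left {d : ℕ} (x y z : Fin d → ℝ) : dot (x + y) z = dot x z + dot y z := by
  simp [dot, add_mul, Finset.sum_add_distrib]

lemma dot_smul_left {d : ℕ} (r : ℝ) (x z : Fin d → ℝ) : dot (r • x) z = r * dot x z := by
  simp [dot, Finset.mul_sum, mul_assoc]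

lemma dot_neg_left {d : ℕ} (x z : Fin d → ℝ) : dot (-x) z = - dot x z := by
  simp [dot]

lemma dot_continuous {d : ℕ} (v : Fin d → ℝ) : Continuous (fun m : Fin d → ℝ => dot m v) := by
  unfold dot
  exact continuous_finset_sum _ fun i _ => (continuous_apply i).mul continuous_const

lemma dot_self_eq_zero {d : ℕ} {x : Fin d → ℝ} (h : dot x x = 0) : x = 0 := by
  funext i
  have h2 : ∀ j ∈ Finset.univ, (0:ℝ) ≤ x j * x j := fun j _ => mul_self_nonneg _
  have := (Finset.sum_eq_zero_iff_of_nonneg h2).1 h i (Finset.mem_univ i)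
  have := mul_self_eq_zero.1 this
  simpa using this

def dotL {d : ℕ} (t : Fin d → ℝ) : (Fin d → ℝ) →ₗ[ℝ] ℝ where
  toFun v := dot t v
  map_add' a b := by simp [dot, mul_add, Finset.sum_add_distrib]
  map_smul' r a := by simp [dot, Finset.mul_sum, mul_left_comm]

lemma dot_eq_funext {d : ℕ} (f : (Fin d → ℝ) →ₗ[ℝ] ℝ) (v : Fin d → ℝ) :
    f v = dot v (fun i => f (Pi.single i 1)) := by
  have hv : v = ∑ i, v i • (Pi.single i (1:ℝ) : Fin d → ℝ) := by
    funext j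
    simp [Finset.sum_apply, Pi.single_apply]
  conv_lhs => rw [hv]
  rw [map_sum]
  simp [dot]

lemma ortho_zero {d : ℕ} {s : Set (Fin d → ℝ)} (hs : Submodule.span ℝ s = ⊤)
    {t : Fin d → ℝ} (ht : ∀ v ∈ s, dot t v = 0) : t = 0 := by
  have hle : Submodule.span ℝ s ≤ LinearMap.ker (dotL t) :=
    Submodule.span_le.2 (fun v hv => ht v hv)
  rw [hs] at hle
  have : dotL t t = 0 := hle Submodule.mem_top
  exact dot_self_eq_zero this

lemma exists_ortho {d : ℕ} {s : Set (Fin d → ℝ)} (hs : Submodule.span ℝ s ≠ ⊤) :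
    ∃ t : Fin d → ℝ, t ≠ 0 ∧ ∀ v ∈ s, dot v t = 0 := by
  obtain ⟨f, hf0, hfmap⟩ :=
    Submodule.exists_dual_map_eq_bot_of_lt_top (lt_top_iff_ne_top.2 hs) inferInstance
  refine ⟨fun i => f (Pi.single i 1), ?_, ?_⟩
  · intro h0
    apply hf0
    refine LinearMap.ext fun v => ?_
    rw [dot_eq_funext f v, h0]
    simp [dot]
  · intro v hv
    have hv' : f v ∈ Submodule.map f (Submodule.span ℝ s) :=
      ⟨v, Submodule.subset_span hv, rfl⟩
    rw [hfmap] at hv'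
    have : f v = 0 := by simpa using hv'
    rw [dot_eq_funext f v] at this
    exact this

lemma slack {d : ℕ} {M : Set (Fin d → ℝ)} (hMcpt : IsCompact M) (hMne : M.Nonempty)
    {v : Fin d → ℝ} {cc : ℝ} (h : ∀ m ∈ M, dot m v < cc) :
    ∃ e : ℝ, 0 < e ∧ ∀ m ∈ M, dot m v ≤ cc - e := by
  obtain ⟨m0, hm0, hmax⟩ := hMcpt.exists_isMaxOn hMne ((dot_continuous v).continuousOn)
  refine ⟨cc - dot m0 v, sub_pos.2 (h m0 hm0), fun m hm => ?_⟩
  have := hmax hm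
  simp only [Set.mem_setOf_eq] at this
  linarith

lemma bound {d : ℕ} {M : Set (Fin d → ℝ)} (hMcpt : IsCompact M) (hMne : M.Nonempty)
    (v : Fin d → ℝ) (w : ℝ) :
    ∃ R : ℝ, 0 ≤ R ∧ ∀ m ∈ M, |dot m v - w| ≤ R := by
  obtain ⟨m0, hm0, hmax⟩ := hMcpt.exists_isMaxOn hMne
    (((dot_continuous v).sub continuous_const).abs.continuousOn)
  refine ⟨|dot m0 v - w|, abs_nonneg _, fun m hm => ?_⟩
  have := hmax hm
  simpa using this

lemma exists_uniform {ι : Type*} [Fintype ι] (δ : ι → ℝ) (hδ : ∀ i, 0 < δ i) :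
    ∃ e : ℝ, 0 < e ∧ e ≤ 1 ∧ ∀ i, e ≤ δ i := by
  classical
  set F : Finset ℝ := insert 1 (Finset.image δ Finset.univ) with hF
  have hFne : F.Nonempty := ⟨1, Finset.mem_insert_self _ _⟩
  refine ⟨F.min' hFne, ?_, F.min'_le 1 (Finset.mem_insert_self _ _), fun i =>
    F.min'_le _ (Finset.mem_insert_of_mem (Finset.mem_image_of_mem δ (Finset.mem_univ i)))⟩
  have hmem := F.min'_mem hFne
  rcases Finset.mem_insert.1 hmem with h | h
  · rw [h]; norm_num
  · obtain ⟨i, _, hi⟩ := Finset.mem_image.1 h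
    rw [← hi]; exact hδ i

/-- Let `A = ⋂ᵢ {z : z·nᵢ ≤ cᵢ}` be a `d`-dimensional polytope with facet-defining
hyperplanes `Hᵢ = {z : z·nᵢ = cᵢ}` (unit outer normals `nᵢ`).  A nonconstant compact convex
`M ⊆ A` admits no homothetic decomposition by a nonzero translation `±t` keeping both
translates in `A`, nor by a dilation about a center `z` with factors `1 ± ε` keeping both
images in `A`, if and only if: (a) the normals of the binding constraints span `ℝ^d` and
(b) the binding hyperplanes have empty intersection. -/
theorem stmt3 {d : ℕ} {ι : Type*} [Fintype ι]
    (n : ι → (Fin d → ℝ)) (c : ι → ℝ) (A M : Set (Fin d → ℝ))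
    (hA : A = ⋂ i, {z | dot z (n i) ≤ c i})
    (hAcpt : IsCompact A) (hAint : (interior A).Nonempty)
    (hn : ∀ i, dot (n i) (n i) = 1)
    (hMA : M ⊆ A) (hMcpt : IsCompact M) (hMconv : Convex ℝ M)
    (hMnc : ∃ a ∈ M, ∃ b ∈ M, a ≠ b) :
    ((¬ ∃ t : Fin d → ℝ, t ≠ 0 ∧ M + ({t} : Set (Fin d → ℝ)) ⊆ A ∧
        M + ({-t} : Set (Fin d → ℝ)) ⊆ A) ∧
      (¬ ∃ (z : Fin d → ℝ) (ε : ℝ), 0 < ε ∧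
        ({z} : Set (Fin d → ℝ)) + (1 + ε) • (M + ({-z} : Set (Fin d → ℝ))) ⊆ A ∧
        ({z} : Set (Fin d → ℝ)) + (1 - ε) • (M + ({-z} : Set (Fin d → ℝ))) ⊆ A))
    ↔
    (Submodule.span ℝ (n '' {i | (M ∩ {z | dot z (n i) = c i}).Nonempty}) = ⊤ ∧
      (⋂ i ∈ {i | (M ∩ {z | dot z (n i) = c i}).Nonempty}, {z | dot z (n i) = c i})
        = (∅ : Set (Fin d → ℝ))) := by
  classical
  obtain ⟨a0, ha0, b0, hb0, hab⟩ := hMnc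
  have hMne : M.Nonempty := ⟨a0, ha0⟩
  have memA : ∀ x, x ∈ A ↔ ∀ i, dot x (n i) ≤ c i := by
    intro x; rw [hA]; simp only [Set.mem_iInter, Set.mem_setOf_eq]
  have hbind : ∀ i : ι, (M ∩ {z | dot z (n i) = c i}).Nonempty ↔
      ∃ m ∈ M, dot m (n i) = c i := by
    intro i
    constructor
    · rintro ⟨m, hm1, hm2⟩; exact ⟨m, hm1, hm2⟩
    · rintro ⟨m, hm1, hm2⟩; exact ⟨m, hm1, hm2⟩
  constructor
  · rintro ⟨hT, hD⟩
    constructor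
    · -- spanning
      by_contra hspan
      obtain ⟨t, ht0, htort⟩ := exists_ortho hspan
      have key : ∀ i : ι, ∃ δ : ℝ, 0 < δ ∧
          ∀ s : ℝ, |s| ≤ δ → ∀ m ∈ M, dot m (n i) + s * dot t (n i) ≤ c i := by
        intro i
        by_cases hi : (M ∩ {z | dot z (n i) = c i}).Nonempty
        · refine ⟨1, one_pos, fun s _ m hm => ?_⟩
          have h0 : dot (n i) t = 0 := htort _ (Set.mem_image_of_mem n hi)
          rw [dot_comm t (n i), h0, mul_zero, add_zero]
          exact (memA m).1 (hMA hm) i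
        · have hlt : ∀ m ∈ M, dot m (n i) < c i := by
            intro m hm
            rcases lt_or_eq_of_le ((memA m).1 (hMA hm) i) with h | h
            · exact h
            · exact absurd ((hbind i).2 ⟨m, hm, h⟩) hi
          obtain ⟨e, he, hslack⟩ := slack hMcpt hMne hlt
          refine ⟨e / (|dot t (n i)| + 1), by positivity, fun s hs m hm => ?_⟩
          have h1 : s * dot t (n i) ≤ |s| * |dot t (n i)| := by
            rw [← abs_mul]; exact le_abs_self _
          have h2 : |s| * |dot t (n i)| ≤ e / (|dot t (n i)| + 1) * |dot t (n i)| :=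
            mul_le_mul_of_nonneg_right hs (abs_nonneg _)
          have h3 : e / (|dot t (n i)| + 1) * |dot t (n i)| ≤ e := by
            rw [div_mul_eq_mul_div, div_le_iff₀ (by positivity)]
            nlinarith [abs_nonneg (dot t (n i))]
          have h4 := hslack m hm
          linarith
      choose δ hδpos hδ using key
      obtain ⟨e, hepos, _, hle⟩ := exists_uniform δ hδpos
      apply hT
      refine ⟨e • t, ?_, ?_, ?_⟩
      · simp only [ne_eq, smul_eq_zero, not_or]
        exact ⟨ne_of_gt hepos, ht0⟩
      · intro x hx
        rw [Set.add_singleton] at hx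
        obtain ⟨m, hm, rfl⟩ := hx
        rw [memA]; intro i
        rw [dot_add_left, dot_smul_left]
        exact hδ i e (by rw [abs_of_pos hepos]; exact hle i) m hm
      · intro x hx
        rw [Set.add_singleton] at hx
        obtain ⟨m, hm, rfl⟩ := hx
        rw [memA]; intro i
        rw [dot_add_left, ← smul_neg, dot_smul_left, dot_neg_left]
        have := hδ i (-e) (by rw [abs_neg, abs_of_pos hepos]; exact hle i) m hm
        linarith
    · -- empty intersection
      by_contra hint
      obtain ⟨z, hz⟩ := Set.nonempty_iff_ne_empty.2 hint
      simp only [Set.mem_iInter, Set.mem_setOf_eq] at hz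
      have key : ∀ i : ι, ∃ δ : ℝ, 0 < δ ∧
          ∀ s : ℝ, 0 ≤ s → |s - 1| ≤ δ → ∀ m ∈ M,
            dot z (n i) + s * (dot m (n i) - dot z (n i)) ≤ c i := by
        intro i
        by_cases hi : (M ∩ {z | dot z (n i) = c i}).Nonempty
        · refine ⟨1, one_pos, fun s hs _ m hm => ?_⟩
          have hzc : dot z (n i) = c i := hz i hi
          have hmc : dot m (n i) ≤ c i := (memA m).1 (hMA hm) i
          rw [hzc]
          nlinarith
        · have hlt : ∀ m ∈ M, dot m (n i) < c i := by
            intro m hm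
            rcases lt_or_eq_of_le ((memA m).1 (hMA hm) i) with h | h
            · exact h
            · exact absurd ((hbind i).2 ⟨m, hm, h⟩) hi
          obtain ⟨e, he, hslack⟩ := slack hMcpt hMne hlt
          obtain ⟨R, hR0, hR⟩ := bound hMcpt hMne (n i) (dot z (n i))
          refine ⟨e / (R + 1), by positivity, fun s _ hs m hm => ?_⟩
          have hval : dot z (n i) + s * (dot m (n i) - dot z (n i)) =
              dot m (n i) + (s - 1) * (dot m (n i) - dot z (n i)) := by ring
          rw [hval]
          have h1 : (s - 1) * (dot m (n i) - dot z (n i)) ≤ |s - 1| * |dot m (n i) - dot z (n i)| := by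
            rw [← abs_mul]; exact le_abs_self _
          have h2 : |s - 1| * |dot m (n i) - dot z (n i)| ≤ (e / (R + 1)) * R := by
            apply mul_le_mul hs (hR m hm) (abs_nonneg _) (by positivity)
          have h3 : (e / (R + 1)) * R ≤ e := by
            rw [div_mul_eq_mul_div, div_le_iff₀ (by positivity)]
            nlinarith
          have h4 := hslack m hm
          linarith
      choose δ hδpos hδ using key
      obtain ⟨e, hepos, he1, hle⟩ := exists_uniform δ hδpos
      apply hD
      refine ⟨z, e, hepos, ?_, ?_⟩
      · intro x hx
        rw [Set.singleton_add] at hx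
        obtain ⟨w, hw, rfl⟩ := hx
        obtain ⟨u, hu, rfl⟩ := hw
        rw [Set.add_singleton] at hu
        obtain ⟨m, hm, rfl⟩ := hu
        rw [memA]; intro i
        rw [dot_add_left, dot_smul_left, dot_add_left, dot_neg_left]
        have := hδ i (1 + e) (by linarith) (by rw [add_sub_cancel_left, abs_of_pos hepos]; exact hle i) m hm
        linarith
      · intro x hx
        rw [Set.singleton_add] at hx
        obtain ⟨w, hw, rfl⟩ := hx
        obtain ⟨u, hu, rfl⟩ := hw
        rw [Set.add_singleton] at hu
        obtain ⟨m, hm, rfl⟩ := hu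
        rw [memA]; intro i
        rw [dot_add_left, dot_smul_left, dot_add_left, dot_neg_left]
        have := hδ i (1 - e) (by linarith)
          (by rw [sub_sub_cancel_left, abs_neg, abs_of_pos hepos]; exact hle i) m hm
        linarith
  · rintro ⟨hspan, hinter⟩
    constructor
    · rintro ⟨t, ht0, hp, hm⟩
      apply ht0
      apply ortho_zero hspan
      rintro v ⟨i, hi, rfl⟩
      obtain ⟨m, hmM, hmc⟩ := (hbind i).1 hi
      have h1 : dot (m + t) (n i) ≤ c i := by
        refine (memA _).1 (hp ?_) i
        exact Set.add_mem_add hmM (Set.mem_singleton t)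
      have h2 : dot (m + -t) (n i) ≤ c i := by
        refine (memA _).1 (hm ?_) i
        exact Set.add_mem_add hmM (Set.mem_singleton (-t))
      rw [dot_add_left, hmc] at h1 h2
      rw [dot_neg_left] at h2
      linarith [dot_comm (n i) t]
    · rintro ⟨z, ε, hε, hp, hm⟩
      have hz : z ∈ ⋂ i ∈ {i : ι | (M ∩ {z | dot z (n i) = c i}).Nonempty},
          {w : Fin d → ℝ | dot w (n i) = c i} := by
        simp only [Set.mem_iInter, Set.mem_setOf_eq]
        intro i hi
        obtain ⟨m, hmM, hmc⟩ := (hbind i).1 hi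
        have hmem1 : z + (1 + ε) • (m + -z) ∈
            ({z} : Set (Fin d → ℝ)) + (1 + ε) • (M + ({-z} : Set (Fin d → ℝ))) :=
          Set.add_mem_add (Set.mem_singleton z)
            (Set.smul_mem_smul_set (Set.add_mem_add hmM (Set.mem_singleton (-z))))
        have hmem2 : z + (1 - ε) • (m + -z) ∈
            ({z} : Set (Fin d → ℝ)) + (1 - ε) • (M + ({-z} : Set (Fin d → ℝ))) :=
          Set.add_mem_add (Set.mem_singleton z)
            (Set.smul_mem_smul_set (Set.add_mem_add hmM (Set.mem_singleton (-z))))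
        have h1 := (memA _).1 (hp hmem1) i
        have h2 := (memA _).1 (hm hmem2) i
        rw [dot_add_left, dot_smul_left, dot_add_left, dot_neg_left, hmc] at h1 h2
        nlinarith
      rw [hinter] at hz
      exact hz
end

section
/- Let A be the unit simplex {a ∈ ℝ^d₊ : Σᵢ aᵢ ≤ 1}. A nonempty compact convex subset M ⊆ A touches every facet of A (i.e., for each i there is a ∈ M with aᵢ = 0, and there is a ∈ M with Σᵢ aᵢ = 1) if and only if M cannot be written as λM' + (1−λ)M'' with λ ∈ (0,1) and M', M'' ⊆ A compact convex sets homothetic to M but distinct from M. -/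
open scoped Pointwise

/-- The unit simplex `{a ∈ ℝ^d₊ : Σᵢ aᵢ ≤ 1}`. -/
def stdSimplexSet (d : ℕ) : Set (Fin d → ℝ) := {a | (∀ i, 0 ≤ a i) ∧ ∑ i, a i ≤ 1}

/-- `K'` is positively homothetic to `K`: `K' = μ • K + {t}` with `μ > 0`. -/
def PosHomotheticTo {E : Type*} [AddCommGroup E] [Module ℝ E] (K' K : Set E) : Prop :=
  ∃ (μ : ℝ) (t : E), 0 < μ ∧ K' = μ • K + ({t} : Set E)

lemma mem_homo {d : ℕ} {M : Set (Fin d → ℝ)} {μ : ℝ} {t x : Fin d → ℝ} :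
    x ∈ μ • M + ({t} : Set (Fin d → ℝ)) ↔ ∃ y ∈ M, μ • y + t = x := by
  simp [Set.add_singleton, Set.mem_image, Set.mem_smul_set, eq_add_neg_iff_add_eq]


lemma smul_set_add' {E : Type*} [AddCommGroup E] [Module ℝ E] (a : ℝ) (s t : Set E) :
    a • (s + t) = a • s + a • t := by
  ext x
  simp only [Set.mem_add, Set.mem_smul_set]
  constructor
  · rintro ⟨_, ⟨u, hu, v, hv, rfl⟩, rfl⟩
    exact ⟨a • u, ⟨u, hu, rfl⟩, a • v, ⟨v, hv, rfl⟩, (smul_add a u v).symm⟩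
  · rintro ⟨_, ⟨u, hu, rfl⟩, _, ⟨v, hv, rfl⟩, rfl⟩
    exact ⟨u + v, ⟨u, hu, v, hv, rfl⟩, smul_add a u v⟩


lemma homo_alg {d : ℕ} {M : Set (Fin d → ℝ)} (hMconv : Convex ℝ M)
    {l μ' μ'' : ℝ} (hl0 : 0 ≤ l) (hl1 : l ≤ 1) (hμ' : 0 ≤ μ') (hμ'' : 0 ≤ μ'')
    (t' t'' : Fin d → ℝ) :
    l • (μ' • M + ({t'} : Set (Fin d → ℝ))) + (1 - l) • (μ'' • M + ({t''} : Set (Fin d → ℝ)))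
      = (l * μ' + (1 - l) * μ'') • M + ({l • t' + (1 - l) • t''} : Set (Fin d → ℝ)) := by
  rw [smul_set_add', smul_set_add', smul_smul, smul_smul, Set.smul_set_singleton,
    Set.smul_set_singleton, hMconv.add_smul (mul_nonneg hl0 hμ') (mul_nonneg (by linarith) hμ''),
    add_add_add_comm, Set.singleton_add_singleton]


lemma rigid {d : ℕ} {M : Set (Fin d → ℝ)} (hMcpt : IsCompact M)
    (hM2 : ∃ a ∈ M, ∃ b ∈ M, a ≠ b) {μ : ℝ} {t : Fin d → ℝ} (hμ : 0 < μ)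
    (hM : M = μ • M + ({t} : Set (Fin d → ℝ))) : μ = 1 ∧ t = 0 := by
  obtain ⟨a, ha, b, hb, hab⟩ := hM2
  have hMne : M.Nonempty := ⟨a, ha⟩
  have key : ∀ c : Fin d → ℝ, ∃ p ∈ M, ∃ q ∈ M,
      (∀ z ∈ M, ∑ i, c i * z i ≤ ∑ i, c i * p i) ∧
      (∀ z ∈ M, ∑ i, c i * q i ≤ ∑ i, c i * z i) ∧
      (∑ i, c i * p i) = μ * (∑ i, c i * p i) + ∑ i, c i * t i ∧
      (∑ i, c i * q i) = μ * (∑ i, c i * q i) + ∑ i, c i * t i := by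
    intro c
    have hcont : Continuous (fun z : Fin d → ℝ => ∑ i, c i * z i) :=
      continuous_finset_sum _ fun i _ => (continuous_const.mul (continuous_apply i))
    obtain ⟨p, hp, hpmax⟩ := hMcpt.exists_isMaxOn hMne hcont.continuousOn
    obtain ⟨q, hq, hqmin⟩ := hMcpt.exists_isMinOn hMne hcont.continuousOn
    have hlin : ∀ z : Fin d → ℝ,
        (∑ i, c i * (μ • z + t) i) = μ * (∑ i, c i * z i) + ∑ i, c i * t i := by
      intro z
      rw [Finset.mul_sum, ← Finset.sum_add_distrib]
      refine Finset.sum_congr rfl fun i _ => ?_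
      simp [smul_eq_mul]; ring
    have hpmax' : ∀ z ∈ M, ∑ i, c i * z i ≤ ∑ i, c i * p i := fun z hz => hpmax hz
    have hqmin' : ∀ z ∈ M, ∑ i, c i * q i ≤ ∑ i, c i * z i := fun z hz => hqmin hz
    refine ⟨p, hp, q, hq, hpmax', hqmin', ?_, ?_⟩
    · obtain ⟨y, hy, hye⟩ := mem_homo.mp (hM ▸ hp)
      have h1 : (∑ i, c i * p i) = μ * (∑ i, c i * y i) + ∑ i, c i * t i := by
        rw [← hye]; exact hlin y
      have h2 : μ • p + t ∈ M := hM ▸ mem_homo.mpr ⟨p, hp, rfl⟩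
      have h3 := hpmax' _ h2
      rw [hlin p] at h3
      have h4 := hpmax' y hy
      nlinarith
    · obtain ⟨y, hy, hye⟩ := mem_homo.mp (hM ▸ hq)
      have h1 : (∑ i, c i * q i) = μ * (∑ i, c i * y i) + ∑ i, c i * t i := by
        rw [← hye]; exact hlin y
      have h2 : μ • q + t ∈ M := hM ▸ mem_homo.mpr ⟨q, hq, rfl⟩
      have h3 := hqmin' _ h2
      rw [hlin q] at h3
      have h4 := hqmin' y hy
      nlinarith
  have hμ1 : μ = 1 := by
    obtain ⟨p, hp, q, hq, hpmax, hqmin, hpe, hqe⟩ := key (a - b)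
    have hD : 0 < (∑ i, (a - b) i * p i) - ∑ i, (a - b) i * q i := by
      have h1 := hpmax a ha
      have h2 := hqmin b hb
      have h3 : 0 < ∑ i, ((a - b) i * a i - (a - b) i * b i) := by
        refine Finset.sum_pos' (fun i _ => ?_) ?_
        · have : (a - b) i * a i - (a - b) i * b i = (a i - b i) * (a i - b i) := by
            simp [Pi.sub_apply]; ring
          rw [this]; exact mul_self_nonneg _
        · obtain ⟨i, hi⟩ := Function.ne_iff.mp hab
          refine ⟨i, Finset.mem_univ i, ?_⟩
          have : (a - b) i * a i - (a - b) i * b i = (a i - b i) * (a i - b i) := by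
            simp [Pi.sub_apply]; ring
          rw [this]
          exact mul_self_pos.mpr (sub_ne_zero.mpr hi)
      rw [Finset.sum_sub_distrib] at h3
      linarith
    nlinarith
  refine ⟨hμ1, ?_⟩
  subst hμ1
  obtain ⟨p, hp, q, hq, hpmax, hqmin, hpe, hqe⟩ := key t
  have ht : ∑ i, t i * t i = 0 := by linarith
  funext i
  have := (Finset.sum_eq_zero_iff_of_nonneg (fun i _ => mul_self_nonneg (t i))).mp ht
    i (Finset.mem_univ i)
  simpa [mul_self_eq_zero] using this

/-- If both homotheties with ratio `1±ε` (centered at `z`) keep `M` inside the simplex,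
then `M` admits a nontrivial decomposition. -/
lemma build {d : ℕ} {M : Set (Fin d → ℝ)} (hMcpt : IsCompact M) (hMconv : Convex ℝ M)
    (hM2 : ∃ a ∈ M, ∃ b ∈ M, a ≠ b) (z : Fin d → ℝ) {ε : ℝ} (hε0 : 0 < ε) (hε1 : ε < 1)
    (h1 : (1 + ε) • M + ({(-ε) • z} : Set (Fin d → ℝ)) ⊆ stdSimplexSet d)
    (h2 : (1 - ε) • M + ({ε • z} : Set (Fin d → ℝ)) ⊆ stdSimplexSet d) :
    ∃ (l : ℝ) (M' M'' : Set (Fin d → ℝ)), 0 < l ∧ l < 1 ∧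
        M' ⊆ stdSimplexSet d ∧ M'' ⊆ stdSimplexSet d ∧
        IsCompact M' ∧ Convex ℝ M' ∧ IsCompact M'' ∧ Convex ℝ M'' ∧
        PosHomotheticTo M' M ∧ PosHomotheticTo M'' M ∧
        M' ≠ M ∧ M'' ≠ M ∧
        M = l • M' + (1 - l) • M'' := by
  refine ⟨1/2, (1 + ε) • M + {(-ε) • z}, (1 - ε) • M + {ε • z}, by norm_num, by norm_num,
    h1, h2, ?_, ?_, ?_, ?_, ⟨1 + ε, (-ε) • z, by linarith, rfl⟩,
    ⟨1 - ε, ε • z, by linarith, rfl⟩, ?_, ?_, ?_⟩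
  · exact (hMcpt.smul _).add isCompact_singleton
  · exact (hMconv.smul _).add (convex_singleton _)
  · exact (hMcpt.smul _).add isCompact_singleton
  · exact (hMconv.smul _).add (convex_singleton _)
  · intro h
    have := (rigid hMcpt hM2 (by linarith : (0:ℝ) < 1 + ε) h.symm).1
    linarith
  · intro h
    have := (rigid hMcpt hM2 (by linarith : (0:ℝ) < 1 - ε) h.symm).1
    linarith
  · rw [homo_alg hMconv (by norm_num) (by norm_num) (by linarith) (by linarith)]
    have hc : (1/2 : ℝ) * (1 + ε) + (1 - 1/2) * (1 - ε) = 1 := by ring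
    have ht : (1/2 : ℝ) • ((-ε) • z) + (1 - 1/2 : ℝ) • (ε • z) = 0 := by
      rw [smul_smul, smul_smul, ← add_smul]
      norm_num
    rw [hc, ht, one_smul]
    simp [Set.add_singleton]


/-- A nonempty compact convex subset `M` of the unit simplex `A` (with at least two points)
touches every facet of `A` iff `M` cannot be written as `λ•M' + (1−λ)•M''` with
`λ ∈ (0,1)` and `M', M'' ⊆ A` compact convex sets homothetic to `M` but distinct from `M`. -/
theorem stmt4 {d : ℕ} (M : Set (Fin d → ℝ))
    (hMA : M ⊆ stdSimplexSet d) (hMne : M.Nonempty)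
    (hMcpt : IsCompact M) (hMconv : Convex ℝ M)
    (hM2 : ∃ a ∈ M, ∃ b ∈ M, a ≠ b) :
    ((∀ i, ∃ a ∈ M, a i = 0) ∧ (∃ a ∈ M, ∑ i, a i = 1))
    ↔
    ¬ ∃ (l : ℝ) (M' M'' : Set (Fin d → ℝ)), 0 < l ∧ l < 1 ∧
        M' ⊆ stdSimplexSet d ∧ M'' ⊆ stdSimplexSet d ∧
        IsCompact M' ∧ Convex ℝ M' ∧ IsCompact M'' ∧ Convex ℝ M'' ∧
        PosHomotheticTo M' M ∧ PosHomotheticTo M'' M ∧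
        M' ≠ M ∧ M'' ≠ M ∧
        M = l • M' + (1 - l) • M'' := by
  constructor
  · rintro ⟨hfac, a₁, ha₁, hsum1⟩
    rintro ⟨l, M', M'', hl0, hl1, hA', hA'', _, _, _, _,
      ⟨μ', t', hμ', rfl⟩, ⟨μ'', t'', hμ'', rfl⟩, hne', hne'', hdec⟩
    rw [homo_alg hMconv hl0.le hl1.le hμ'.le hμ''.le] at hdec
    obtain ⟨hcoef, htr⟩ := rigid hMcpt hM2 (by nlinarith) hdec
    -- translations vanish
    have ht' : t' = 0 ∧ t'' = 0 := by
      have h0 : ∀ i, 0 ≤ t' i ∧ 0 ≤ t'' i := by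
        intro i
        obtain ⟨a, ha, hai⟩ := hfac i
        constructor
        · have hm : μ' • a + t' ∈ stdSimplexSet d := hA' (mem_homo.mpr ⟨a, ha, rfl⟩)
          have := hm.1 i
          simpa [hai] using this
        · have hm : μ'' • a + t'' ∈ stdSimplexSet d := hA'' (mem_homo.mpr ⟨a, ha, rfl⟩)
          have := hm.1 i
          simpa [hai] using this
      constructor <;> funext i <;> simp only [Pi.zero_apply] <;>
      · have h1 := congrFun htr i
        simp only [Pi.add_apply, Pi.smul_apply, smul_eq_mul, Pi.zero_apply] at h1
        have := (h0 i).1; have := (h0 i).2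
        nlinarith
    obtain ⟨rfl, rfl⟩ := ht'
    -- ratios are at most one
    have hμ'le : μ' ≤ 1 := by
      have hm : μ' • a₁ + 0 ∈ stdSimplexSet d := hA' (mem_homo.mpr ⟨a₁, ha₁, rfl⟩)
      have := hm.2
      have hs : ∑ i, (μ' • a₁ + 0) i = μ' := by
        simp [← Finset.mul_sum, hsum1]
      rw [hs] at this; exact this
    have hμ''le : μ'' ≤ 1 := by
      have hm : μ'' • a₁ + 0 ∈ stdSimplexSet d := hA'' (mem_homo.mpr ⟨a₁, ha₁, rfl⟩)
      have := hm.2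
      have hs : ∑ i, (μ'' • a₁ + 0) i = μ'' := by
        simp [← Finset.mul_sum, hsum1]
      rw [hs] at this; exact this
    have hμ'1 : μ' = 1 := by nlinarith
    apply hne'
    rw [hμ'1, one_smul]
    simp [Set.add_singleton]
  · intro hno
    constructor
    · by_contra hfac
      push_neg at hfac
      obtain ⟨i, hi⟩ := hfac
      obtain ⟨a₀, ha₀, hmin⟩ := hMcpt.exists_isMinOn hMne (continuous_apply i).continuousOn
      set δ := a₀ i with hδ
      have hδ0 : 0 < δ := lt_of_le_of_ne ((hMA ha₀).1 i) (Ne.symm (hi a₀ ha₀))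
      have hδ1 : δ ≤ 1 := by
        have h1 : δ ≤ ∑ j, a₀ j :=
          Finset.single_le_sum (fun j _ => (hMA ha₀).1 j) (Finset.mem_univ i)
        linarith [(hMA ha₀).2]
      set z : Fin d → ℝ := Pi.single i 1 with hz
      have hzsum : ∑ j, z j = 1 := by simp [hz]
      refine hno (build hMcpt hMconv hM2 z (ε := δ/2) (by linarith) (by linarith) ?_ ?_)
      · rintro x hx
        obtain ⟨y, hy, rfl⟩ := mem_homo.mp hx
        have hyA := hMA hy
        constructor
        · intro j
          simp only [Pi.add_apply, Pi.smul_apply, smul_eq_mul]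
          rcases eq_or_ne j i with rfl | hji
          · have : δ ≤ y j := hmin hy
            simp only [hz, Pi.single_eq_same]
            nlinarith [hyA.1 j]
          · simp only [hz, Pi.single_eq_of_ne hji]
            nlinarith [hyA.1 j]
        · have : ∑ j, ((1 + δ/2) • y + (-(δ/2)) • z) j
              = (1 + δ/2) * ∑ j, y j + (-(δ/2)) * ∑ j, z j := by
            simp [Finset.sum_add_distrib, ← Finset.mul_sum]
          rw [this, hzsum]
          nlinarith [hyA.2, hyA.1 i]
      · rintro x hx
        obtain ⟨y, hy, rfl⟩ := mem_homo.mp hx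
        have hyA := hMA hy
        constructor
        · intro j
          simp only [Pi.add_apply, Pi.smul_apply, smul_eq_mul]
          rcases eq_or_ne j i with rfl | hji
          · simp only [hz, Pi.single_eq_same]
            nlinarith [hyA.1 j]
          · simp only [hz, Pi.single_eq_of_ne hji]
            nlinarith [hyA.1 j]
        · have : ∑ j, ((1 - δ/2) • y + (δ/2) • z) j
              = (1 - δ/2) * ∑ j, y j + (δ/2) * ∑ j, z j := by
            simp [Finset.sum_add_distrib, ← Finset.mul_sum]
          rw [this, hzsum]
          nlinarith [hyA.2]
    · by_contra hsum
      push_neg at hsum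
      have hcont : Continuous (fun y : Fin d → ℝ => ∑ j, y j) :=
        continuous_finset_sum _ fun j _ => continuous_apply j
      obtain ⟨a₀, ha₀, hmax⟩ := hMcpt.exists_isMaxOn hMne hcont.continuousOn
      set s := ∑ j, a₀ j with hs
      have hs1 : s < 1 := lt_of_le_of_ne (hMA ha₀).2 (hsum a₀ ha₀)
      have hs0 : 0 ≤ s := Finset.sum_nonneg fun j _ => (hMA ha₀).1 j
      set ε := (1 - s)/2 with hε
      refine hno (build hMcpt hMconv hM2 0 (ε := ε) (by linarith) (by linarith) ?_ ?_)
      · rintro x hx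
        obtain ⟨y, hy, rfl⟩ := mem_homo.mp hx
        have hyA := hMA hy
        constructor
        · intro j
          simp only [Pi.add_apply, Pi.smul_apply, smul_eq_mul, smul_zero, Pi.zero_apply]
          nlinarith [hyA.1 j]
        · have hys : ∑ j, y j ≤ s := hmax hy
          have hy0 : 0 ≤ ∑ j, y j := Finset.sum_nonneg fun j _ => hyA.1 j
          have : ∑ j, ((1 + ε) • y + (-ε) • (0 : Fin d → ℝ)) j = (1 + ε) * ∑ j, y j := by
            simp [← Finset.mul_sum]
          rw [this]
          nlinarith
      · rintro x hx
        obtain ⟨y, hy, rfl⟩ := mem_homo.mp hx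
        have hyA := hMA hy
        constructor
        · intro j
          simp only [Pi.add_apply, Pi.smul_apply, smul_eq_mul, smul_zero, Pi.zero_apply]
          nlinarith [hyA.1 j]
        · have : ∑ j, ((1 - ε) • y + ε • (0 : Fin d → ℝ)) j = (1 - ε) * ∑ j, y j := by
            simp [← Finset.mul_sum]
          rw [this]
          have hy0 : 0 ≤ ∑ j, y j := Finset.sum_nonneg fun j _ => hyA.1 j
          nlinarith [hyA.2]
end

section
/- Let A be the unit simplex in ℝ^d and suppose a compact convex set M ⊆ A is decomposable as a convex body, i.e., M = K' + K'' with convex bodies K', K'' ⊂ ℝ^d neither homothetic to M. Then there exist λ ∈ (0,1), t ∈ ℝ^d such that M' = (1/λ)(K' + t) ⊆ A and M'' = (1/(1−λ))(K'' − t) ⊆ A, giving a decomposition M = λM' + (1−λ)M'' into compact convex subsets of A not homothetic to M. -/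
open scoped Pointwise

/-- A convex body: a nonempty compact convex set. -/
def IsConvexBody {E : Type*} [AddCommGroup E] [Module ℝ E] [TopologicalSpace E]
    (K : Set E) : Prop :=
  K.Nonempty ∧ IsCompact K ∧ Convex ℝ K

/-- `K'` is homothetic to `K`: `K' = μ • K + {t}` for some `μ ≥ 0` and translation `t`. -/
def HomotheticTo {E : Type*} [AddCommGroup E] [Module ℝ E] (K' K : Set E) : Prop :=
  ∃ (μ : ℝ) (t : E), 0 ≤ μ ∧ K' = μ • K + ({t} : Set E)

lemma singleton_homothetic {E : Type*} [AddCommGroup E] [Module ℝ E]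
    (K : Set E) (hK : K.Nonempty) (v : E) : HomotheticTo ({v} : Set E) K := by
  refine ⟨0, v, le_refl _, ?_⟩
  rw [Set.zero_smul_set hK, zero_add]

lemma add_singleton_cancel {E : Type*} [AddCommGroup E]
    {S T : Set E} {v : E} (h : S + ({v} : Set E) = T) : S = T + ({-v} : Set E) := by
  rw [← h, add_assoc, Set.singleton_add_singleton, add_neg_cancel,
    Set.singleton_zero, add_zero]

/-- If a compact convex subset `M` of the unit simplex is decomposable as a convex body,
`M = K' + K''` with neither summand homothetic to `M`, then there are `λ ∈ (0,1)` and
`t ∈ ℝ^d` such that `M' = (1/λ)(K'+t)` and `M'' = (1/(1−λ))(K''−t)` are compact convex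
subsets of the simplex, not homothetic to `M`, with `M = λM' + (1−λ)M''`. -/
theorem stmt5 {d : ℕ} (M K' K'' : Set (Fin d → ℝ))
    (hMA : M ⊆ stdSimplexSet d) (hMne : M.Nonempty)
    (hMcpt : IsCompact M) (hMconv : Convex ℝ M)
    (hK' : IsConvexBody K') (hK'' : IsConvexBody K'')
    (hdecomp : M = K' + K'')
    (h1 : ¬ HomotheticTo K' M) (h2 : ¬ HomotheticTo K'' M) :
    ∃ (l : ℝ) (t : Fin d → ℝ), 0 < l ∧ l < 1 ∧
      l⁻¹ • (K' + ({t} : Set (Fin d → ℝ))) ⊆ stdSimplexSet d ∧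
      (1 - l)⁻¹ • (K'' + ({-t} : Set (Fin d → ℝ))) ⊆ stdSimplexSet d ∧
      M = l • (l⁻¹ • (K' + ({t} : Set (Fin d → ℝ))))
          + (1 - l) • ((1 - l)⁻¹ • (K'' + ({-t} : Set (Fin d → ℝ)))) ∧
      IsCompact (l⁻¹ • (K' + ({t} : Set (Fin d → ℝ)))) ∧
      Convex ℝ (l⁻¹ • (K' + ({t} : Set (Fin d → ℝ)))) ∧
      IsCompact ((1 - l)⁻¹ • (K'' + ({-t} : Set (Fin d → ℝ)))) ∧
      Convex ℝ ((1 - l)⁻¹ • (K'' + ({-t} : Set (Fin d → ℝ)))) ∧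
      ¬ HomotheticTo (l⁻¹ • (K' + ({t} : Set (Fin d → ℝ)))) M ∧
      ¬ HomotheticTo ((1 - l)⁻¹ • (K'' + ({-t} : Set (Fin d → ℝ)))) M := by
  classical
  obtain ⟨hK'ne, hK'cpt, hK'conv⟩ := hK'
  obtain ⟨hK''ne, hK''cpt, hK''conv⟩ := hK''
  -- coordinate infima and sum suprema
  set g : Fin d → ℝ := fun i => sInf ((fun a => a i) '' K') with hgdef
  set g2 : Fin d → ℝ := fun i => sInf ((fun a => a i) '' K'') with hg2def
  set S : ℝ := sSup ((fun a : Fin d → ℝ => ∑ i, a i) '' K') with hSdef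
  set S2 : ℝ := sSup ((fun a : Fin d → ℝ => ∑ i, a i) '' K'') with hS2def
  have hgle : ∀ a ∈ K', ∀ i, g i ≤ a i := fun a ha i =>
    csInf_le (hK'cpt.image (continuous_apply i)).bddBelow ⟨a, ha, rfl⟩
  have hg2le : ∀ b ∈ K'', ∀ i, g2 i ≤ b i := fun b hb i =>
    csInf_le (hK''cpt.image (continuous_apply i)).bddBelow ⟨b, hb, rfl⟩
  have hgmem : ∀ i, ∃ x ∈ K', x i = g i := by
    intro i
    have := (hK'cpt.image (continuous_apply i)).sInf_mem (hK'ne.image _)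
    obtain ⟨x, hx, hx'⟩ := this
    exact ⟨x, hx, hx'⟩
  have hg2mem : ∀ i, ∃ x ∈ K'', x i = g2 i := by
    intro i
    have := (hK''cpt.image (continuous_apply i)).sInf_mem (hK''ne.image _)
    obtain ⟨x, hx, hx'⟩ := this
    exact ⟨x, hx, hx'⟩
  have hsumcont : Continuous (fun a : Fin d → ℝ => ∑ i, a i) := by
    exact continuous_finset_sum _ fun i _ => continuous_apply i
  have hSle : ∀ a ∈ K', ∑ i, a i ≤ S := fun a ha =>
    le_csSup (hK'cpt.image hsumcont).bddAbove ⟨a, ha, rfl⟩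
  have hS2le : ∀ b ∈ K'', ∑ i, b i ≤ S2 := fun b hb =>
    le_csSup (hK''cpt.image hsumcont).bddAbove ⟨b, hb, rfl⟩
  have hSmem : ∃ w ∈ K', ∑ i, w i = S := by
    obtain ⟨w, hw, hw'⟩ := (hK'cpt.image hsumcont).sSup_mem (hK'ne.image _)
    exact ⟨w, hw, hw'⟩
  have hS2mem : ∃ w ∈ K'', ∑ i, w i = S2 := by
    obtain ⟨w, hw, hw'⟩ := (hK''cpt.image hsumcont).sSup_mem (hK''ne.image _)
    exact ⟨w, hw, hw'⟩
  set l : ℝ := S - ∑ i, g i with hldef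
  -- cross positivity
  have hcross : ∀ i, 0 ≤ g i + g2 i := by
    intro i
    obtain ⟨x, hx, hx'⟩ := hgmem i
    obtain ⟨y, hy, hy'⟩ := hg2mem i
    have hm : x + y ∈ M := hdecomp ▸ Set.add_mem_add hx hy
    have := (hMA hm).1 i
    simpa [hx', hy'] using this
  have hsumcross : S + S2 ≤ 1 := by
    obtain ⟨w, hw, hw'⟩ := hSmem
    obtain ⟨w2, hw2, hw2'⟩ := hS2mem
    have hm : w + w2 ∈ M := hdecomp ▸ Set.add_mem_add hw hw2
    have := (hMA hm).2
    rw [show ∑ i, (w + w2) i = ∑ i, w i + ∑ i, w2 i by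
      simp [Finset.sum_add_distrib]] at this
    rwa [hw', hw2'] at this
  have hl0 : 0 < l := by
    by_contra h
    push_neg at h
    apply h1
    have hKsing : K' = {g} := by
      apply Set.Subset.antisymm
      · intro a ha
        have hsum : ∑ i, (a i - g i) = 0 := by
          have h1' : ∑ i, (a i - g i) ≤ 0 := by
            have : ∑ i, (a i - g i) = ∑ i, a i - ∑ i, g i := by
              rw [Finset.sum_sub_distrib]
            rw [this]
            have := hSle a ha
            linarith
          have h2' : 0 ≤ ∑ i, (a i - g i) :=
            Finset.sum_nonneg fun i _ => sub_nonneg.2 (hgle a ha i)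
          linarith
        have := (Finset.sum_eq_zero_iff_of_nonneg
          (fun i _ => sub_nonneg.2 (hgle a ha i))).1 hsum
        have : a = g := funext fun i => by
          have := this i (Finset.mem_univ i); linarith [sub_eq_zero.1 this]
        simp [this]
      · intro a ha
        obtain ⟨x, hx⟩ := hK'ne
        have hag : a = g := ha
        have hxg : x = g := by
          have hsum : ∑ i, (x i - g i) = 0 := by
            have h1' : ∑ i, (x i - g i) ≤ 0 := by
              rw [Finset.sum_sub_distrib]
              have := hSle x hx
              linarith
            have h2' : 0 ≤ ∑ i, (x i - g i) :=
              Finset.sum_nonneg fun i _ => sub_nonneg.2 (hgle x hx i)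
            linarith
          have := (Finset.sum_eq_zero_iff_of_nonneg
            (fun i _ => sub_nonneg.2 (hgle x hx i))).1 hsum
          exact funext fun i => by
            have := this i (Finset.mem_univ i); linarith [sub_eq_zero.1 this]
        rw [hag, ← hxg]; exact hx
    rw [hKsing]
    exact singleton_homothetic M hMne g
  have hgb : ∀ b ∈ K'', ∀ i, 0 ≤ b i + g i := by
    intro b hb i
    have := hg2le b hb i
    have := hcross i
    linarith
  have hsb : ∀ b ∈ K'', ∑ i, (b i + g i) ≤ 1 - l := by
    intro b hb
    have h1' : ∑ i, (b i + g i) = ∑ i, b i + ∑ i, g i := Finset.sum_add_distrib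
    have := hS2le b hb
    rw [h1']
    have : ∑ i, b i ≤ 1 - S := by linarith
    rw [hldef]; linarith
  have hl1 : l < 1 := by
    by_contra h
    push_neg at h
    apply h2
    have hKsing : K'' = {-g} := by
      apply Set.Subset.antisymm
      · intro b hb
        have hsum : ∑ i, (b i + g i) = 0 := by
          have := hsb b hb
          have h2' : 0 ≤ ∑ i, (b i + g i) :=
            Finset.sum_nonneg fun i _ => hgb b hb i
          linarith
        have := (Finset.sum_eq_zero_iff_of_nonneg
          (fun i _ => hgb b hb i)).1 hsum
        have : b = -g := funext fun i => by
          have := this i (Finset.mem_univ i)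
          simp only [Pi.neg_apply]; linarith
        simp [this]
      · intro b hb
        obtain ⟨y, hy⟩ := hK''ne
        have hyg : y = -g := by
          have hsum : ∑ i, (y i + g i) = 0 := by
            have := hsb y hy
            have h2' : 0 ≤ ∑ i, (y i + g i) :=
              Finset.sum_nonneg fun i _ => hgb y hy i
            linarith
          have := (Finset.sum_eq_zero_iff_of_nonneg
            (fun i _ => hgb y hy i)).1 hsum
          exact funext fun i => by
            have := this i (Finset.mem_univ i)
            simp only [Pi.neg_apply]; linarith
        have hbg : b = -g := hb
        rw [hbg, ← hyg]; exact hy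
    rw [hKsing]
    exact singleton_homothetic M hMne (-g)
  have hl1' : 0 < 1 - l := by linarith
  refine ⟨l, -g, hl0, hl1, ?_, ?_, ?_, ?_, ?_, ?_, ?_, ?_, ?_⟩
  · -- M' ⊆ simplex
    rintro c ⟨x, hx, rfl⟩
    obtain ⟨a, ha, t', ht', rfl⟩ := hx
    rw [Set.mem_singleton_iff] at ht'
    subst ht'
    constructor
    · intro i
      have : 0 ≤ a i - g i := sub_nonneg.2 (hgle a ha i)
      have : 0 ≤ l⁻¹ * (a i - g i) := mul_nonneg (inv_nonneg.2 hl0.le) this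
      simpa [sub_eq_add_neg] using this
    · have hsum : ∑ i, (l⁻¹ • (a + -g)) i = l⁻¹ * (∑ i, a i - ∑ i, g i) := by
        simp only [Pi.smul_apply, Pi.add_apply, Pi.neg_apply, smul_eq_mul,
          ← Finset.mul_sum, Finset.sum_add_distrib, Finset.sum_neg_distrib]
        ring
      rw [hsum]
      have h1' : ∑ i, a i - ∑ i, g i ≤ l := by
        have := hSle a ha; rw [hldef]; linarith
      calc l⁻¹ * (∑ i, a i - ∑ i, g i) ≤ l⁻¹ * l :=
            mul_le_mul_of_nonneg_left h1' (inv_nonneg.2 hl0.le)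
        _ = 1 := inv_mul_cancel₀ hl0.ne'
  · -- M'' ⊆ simplex
    rintro c ⟨x, hx, rfl⟩
    obtain ⟨b, hb, t', ht', rfl⟩ := hx
    rw [Set.mem_singleton_iff] at ht'
    subst ht'
    constructor
    · intro i
      have : 0 ≤ b i + g i := hgb b hb i
      have : 0 ≤ (1 - l)⁻¹ * (b i + g i) := mul_nonneg (inv_nonneg.2 hl1'.le) this
      simpa using this
    · have hsum : ∑ i, ((1 - l)⁻¹ • (b + - -g)) i
          = (1 - l)⁻¹ * ∑ i, (b i + g i) := by
        simp only [Pi.smul_apply, Pi.add_apply, Pi.neg_apply, neg_neg, smul_eq_mul,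
          ← Finset.mul_sum]
      rw [hsum]
      calc (1 - l)⁻¹ * ∑ i, (b i + g i) ≤ (1 - l)⁻¹ * (1 - l) :=
            mul_le_mul_of_nonneg_left (hsb b hb) (inv_nonneg.2 hl1'.le)
        _ = 1 := inv_mul_cancel₀ hl1'.ne'
  · -- decomposition
    rw [smul_inv_smul₀ hl0.ne', smul_inv_smul₀ hl1'.ne', hdecomp,
      add_add_add_comm, Set.singleton_add_singleton]
    simp
  · exact (hK'cpt.add isCompact_singleton).smul l⁻¹
  · exact (hK'conv.add (convex_singleton _)).smul l⁻¹
  · exact (hK''cpt.add isCompact_singleton).smul (1 - l)⁻¹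
  · exact (hK''conv.add (convex_singleton _)).smul (1 - l)⁻¹
  · rintro ⟨μ, s, hμ, heq⟩
    apply h1
    have heq2 : K' + {-g} = (l * μ) • M + {l • s} := by
      have := congrArg (fun T => l • T) heq
      simp only [smul_inv_smul₀ hl0.ne'] at this
      rw [this, smul_add, smul_smul, Set.smul_set_singleton]
    refine ⟨l * μ, l • s + g, mul_nonneg hl0.le hμ, ?_⟩
    have := add_singleton_cancel heq2
    rw [this, add_assoc, Set.singleton_add_singleton, neg_neg]
  · rintro ⟨μ, s, hμ, heq⟩
    apply h2
    simp only [neg_neg] at heq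
    have heq2 : K'' + {g} = ((1 - l) * μ) • M + {(1 - l) • s} := by
      have := congrArg (fun T => (1 - l) • T) heq
      simp only [smul_inv_smul₀ hl1'.ne'] at this
      rw [this, smul_add, smul_smul, Set.smul_set_singleton]
    refine ⟨(1 - l) * μ, (1 - l) • s - g, mul_nonneg hl1'.le hμ, ?_⟩
    have := add_singleton_cancel heq2
    rw [this, add_assoc, Set.singleton_add_singleton, sub_eq_add_neg ((1 - l) • s) g]
end

section
/- In the one-good monopoly problem, a mechanism given by a posted price p ∈ (0,1) — allocate the good and charge p to every type θ ≥ p, allocate nothing and charge 0 to every type θ < p — is an extreme point of the set of incentive-compatible, individually rational (IC-IR) mechanisms: it cannot be written as a pointwise-a.e. convex combination x = λx' + (1−λ)x'', λ ∈ (0,1), of two IC-IR mechanisms x' ≠ x''. -/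
open MeasureTheory

/-- A mechanism `(q,t)` on the type space `[0,1]` is incentive compatible and individually
rational: allocations in `[0,1]`, nonnegative payments, truth-telling, and participation. -/
def ICIR (q t : ℝ → ℝ) : Prop :=
  (∀ θ ∈ Set.Icc (0 : ℝ) 1, q θ ∈ Set.Icc (0 : ℝ) 1 ∧ 0 ≤ t θ) ∧
  (∀ θ ∈ Set.Icc (0 : ℝ) 1, ∀ θ' ∈ Set.Icc (0 : ℝ) 1,
    θ * q θ' - t θ' ≤ θ * q θ - t θ) ∧
  (∀ θ ∈ Set.Icc (0 : ℝ) 1, 0 ≤ θ * q θ - t θ)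

/-- In the one-good monopoly problem, the posted-price mechanism with price `p ∈ (0,1)` is
an extreme point of the set of IC-IR mechanisms (identified up to a.e. equality): whenever
it is an a.e. pointwise convex combination of two IC-IR mechanisms, the two coincide a.e. -/
theorem stmt18 (p : ℝ) (hp0 : 0 < p) (hp1 : p < 1)
    (q t : ℝ → ℝ)
    (hq : ∀ θ, q θ = if p ≤ θ then 1 else 0)
    (ht : ∀ θ, t θ = if p ≤ θ then p else 0) :
    ∀ (q₁ t₁ q₂ t₂ : ℝ → ℝ) (l : ℝ), 0 < l → l < 1 →
      ICIR q₁ t₁ → ICIR q₂ t₂ →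
      (∀ᵐ θ ∂(volume.restrict (Set.Icc (0 : ℝ) 1)),
        q θ = l * q₁ θ + (1 - l) * q₂ θ ∧ t θ = l * t₁ θ + (1 - l) * t₂ θ) →
      (∀ᵐ θ ∂(volume.restrict (Set.Icc (0 : ℝ) 1)), q₁ θ = q₂ θ ∧ t₁ θ = t₂ θ) := by
  intro q₁ t₁ q₂ t₂ l hl0 hl1 hIC1 hIC2 hmix
  -- in any subinterval (a, p) there is a "good" point where the mixture identity holds
  have exist : ∀ a : ℝ, 0 ≤ a → a < p →
      ∃ θ', a < θ' ∧ θ' < p ∧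
        (q θ' = l * q₁ θ' + (1 - l) * q₂ θ' ∧ t θ' = l * t₁ θ' + (1 - l) * t₂ θ') := by
    intro a ha hap
    by_contra hcon
    push_neg at hcon
    have hsub : Set.Ioo a p ⊆
        {θ | ¬ (q θ = l * q₁ θ + (1 - l) * q₂ θ ∧ t θ = l * t₁ θ + (1 - l) * t₂ θ)} := by
      intro x hx
      rintro ⟨h1, h2⟩
      exact hcon x hx.1 hx.2 h1 h2
    have h0 : (volume.restrict (Set.Icc (0 : ℝ) 1)) (Set.Ioo a p) = 0 :=
      measure_mono_null hsub (ae_iff.mp hmix)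
    have hIoo : Set.Ioo a p ⊆ Set.Icc (0 : ℝ) 1 := fun x hx =>
      ⟨le_trans ha hx.1.le, le_trans hx.2.le hp1.le⟩
    rw [Measure.restrict_apply measurableSet_Ioo, Set.inter_eq_left.mpr hIoo,
      Real.volume_Ioo] at h0
    simp only [ENNReal.ofReal_eq_zero] at h0
    linarith
  -- below p, both mechanisms allocate nothing and charge nothing at good points
  have zero_low : ∀ θ' ∈ Set.Icc (0 : ℝ) 1, θ' < p →
      q θ' = l * q₁ θ' + (1 - l) * q₂ θ' → t θ' = l * t₁ θ' + (1 - l) * t₂ θ' →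
      q₁ θ' = 0 ∧ q₂ θ' = 0 ∧ t₁ θ' = 0 ∧ t₂ θ' = 0 := by
    intro θ' hI hlt h1 h2
    rw [hq θ', if_neg (not_le.mpr hlt)] at h1
    rw [ht θ', if_neg (not_le.mpr hlt)] at h2
    obtain ⟨hm1, ht1n⟩ := hIC1.1 θ' hI
    obtain ⟨hm2, ht2n⟩ := hIC2.1 θ' hI
    obtain ⟨hq1l, hq1u⟩ := Set.mem_Icc.mp hm1
    obtain ⟨hq2l, hq2u⟩ := Set.mem_Icc.mp hm2
    refine ⟨by nlinarith, by nlinarith, by nlinarith, by nlinarith⟩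
  filter_upwards [hmix, ae_restrict_mem measurableSet_Icc] with θ hP hθ
  obtain ⟨hPq, hPt⟩ := hP
  by_cases hpθ : p ≤ θ
  · rw [hq θ, if_pos hpθ] at hPq
    rw [ht θ, if_pos hpθ] at hPt
    obtain ⟨hm1, ht1n⟩ := hIC1.1 θ hθ
    obtain ⟨hm2, ht2n⟩ := hIC2.1 θ hθ
    obtain ⟨hq1l, hq1u⟩ := Set.mem_Icc.mp hm1
    obtain ⟨hq2l, hq2u⟩ := Set.mem_Icc.mp hm2
    have hq1 : q₁ θ = 1 := by nlinarith
    have hq2 : q₂ θ = 1 := by nlinarith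
    have key : ∀ (Q T : ℝ → ℝ), ICIR Q T → Q θ = 1 →
        (∀ x ∈ Set.Icc (0:ℝ) 1, x < p →
          q x = l * q₁ x + (1 - l) * q₂ x → t x = l * t₁ x + (1 - l) * t₂ x →
          Q x = 0 ∧ T x = 0) → p ≤ T θ := by
      intro Q T hIC hQ1 hzero
      by_contra h
      push_neg at h
      obtain ⟨θ', hθ'a, hθ'p, hP1, hP2⟩ :=
        exist (max 0 (T θ)) (le_max_left _ _) (max_lt hp0 h)
      have hθ'I : θ' ∈ Set.Icc (0 : ℝ) 1 :=
        ⟨le_trans (le_max_left _ _) hθ'a.le, le_trans hθ'p.le hp1.le⟩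
      obtain ⟨hQ0, hT0⟩ := hzero θ' hθ'I hθ'p hP1 hP2
      have hICtt := hIC.2.1 θ' hθ'I θ hθ
      have : T θ < θ' := lt_of_le_of_lt (le_max_right 0 (T θ)) hθ'a
      rw [hQ0, hT0, hQ1] at hICtt
      linarith
    have ht1 : p ≤ t₁ θ := key q₁ t₁ hIC1 hq1
      (fun x hx hxp h1 h2 => ⟨(zero_low x hx hxp h1 h2).1, (zero_low x hx hxp h1 h2).2.2.1⟩)
    have ht2 : p ≤ t₂ θ := key q₂ t₂ hIC2 hq2
      (fun x hx hxp h1 h2 => ⟨(zero_low x hx hxp h1 h2).2.1, (zero_low x hx hxp h1 h2).2.2.2⟩)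
    constructor
    · rw [hq1, hq2]
    · nlinarith
  · push_neg at hpθ
    obtain ⟨h1, h2, h3, h4⟩ := zero_low θ hθ hpθ hPq hPt
    exact ⟨by rw [h1, h2], by rw [h3, h4]⟩
end
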